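/- Let f : {0,1}^k → {0,1} and g₁, …, g_k : {0,1}^m → {0,1}, and let h : {0,1}^m → {0,1} be the composed function h(x) = f(g₁(x), …, g_k(x)). Then for any ε, δ ≥ 0 with ε + k·δ ≤ 1, pdeg_{ε + kδ}(h) ≤ pdeg_ε(f) · max_{i∈[k]} pdeg_δ(g_i). -/

import Mathlib

open scoped Classical

noncomputable def evalBool {ι : Type} (a : ι → Bool) (P : MvPolynomial ι ℝ) : ℝ :=
  MvPolynomial.eval (fun i => if a i then (1:ℝ) else 0) P

def HasProbPoly {ι : Type} (f : (ι → Bool) → Bool) (ε : ℝ) (d : ℕ) : Prop :=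
  ∃ (k : ℕ) (w : Fin k → ℝ) (P : Fin k → MvPolynomial ι ℝ),
    (∀ i, 0 ≤ w i) ∧ (∑ i, w i = 1) ∧ (∀ i, (P i).totalDegree ≤ d) ∧
    ∀ a : ι → Bool,
      ∑ i ∈ Finset.univ.filter
          (fun i => evalBool a (P i) ≠ (if f a then (1:ℝ) else 0)), w i ≤ ε

noncomputable def pdeg {ι : Type} (ε : ℝ) (f : (ι → Bool) → Bool) : ℕ :=
  sInf {d | HasProbPoly f ε d}

def TrulyVariate {ι : Type} (f : (ι → Bool) → Bool) : Prop :=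
  ∀ i : ι, ∃ a, f (Function.update a i (!(a i))) ≠ f a

def ORf (n : ℕ) : (Fin n → Bool) → Bool := fun a => decide (∃ i, a i = true)

noncomputable def sensitivity {n : ℕ} (f : (Fin n → Bool) → Bool) : ℕ :=
  Finset.univ.sup (fun a : Fin n → Bool =>
    (Finset.univ.filter (fun i : Fin n => f (Function.update a i (!(a i))) ≠ f a)).card)


/-! auxiliary lemmas -/

lemma totalDegree_aeval_le {ι τ : Type} (Q : ι → MvPolynomial τ ℝ) (p : MvPolynomial ι ℝ)
    (D : ℕ) (hQ : ∀ i, (Q i).totalDegree ≤ D) :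
    (MvPolynomial.aeval Q p).totalDegree ≤ p.totalDegree * D := by
  rw [MvPolynomial.aeval_def, MvPolynomial.eval₂_eq]
  refine MvPolynomial.totalDegree_finsetSum_le (fun s hs => ?_)
  refine (MvPolynomial.totalDegree_mul _ _).trans ?_
  rw [show (algebraMap ℝ (MvPolynomial τ ℝ)) (p.coeff s) = MvPolynomial.C (p.coeff s) from rfl,
    MvPolynomial.totalDegree_C, zero_add]
  refine (MvPolynomial.totalDegree_finset_prod _ _).trans ?_
  calc ∑ i ∈ s.support, ((Q i ^ s i).totalDegree)
      ≤ ∑ i ∈ s.support, s i * D := by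
        refine Finset.sum_le_sum fun i _ => ?_
        exact (MvPolynomial.totalDegree_pow _ _).trans (Nat.mul_le_mul_left _ (hQ i))
    _ = (∑ i ∈ s.support, s i) * D := (Finset.sum_mul _ _ _).symm
    _ ≤ p.totalDegree * D := Nat.mul_le_mul_right _ (MvPolynomial.le_totalDegree hs)

lemma evalBool_aeval {ι τ : Type} (a : τ → Bool) (Q : ι → MvPolynomial τ ℝ)
    (p : MvPolynomial ι ℝ) :
    evalBool a (MvPolynomial.aeval Q p)
      = MvPolynomial.eval (fun i => evalBool a (Q i)) p := by
  unfold evalBool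
  rw [MvPolynomial.aeval_def, MvPolynomial.eval₂_comp_left (MvPolynomial.eval _)]
  congr 1
  ext r : 2
  simp


lemma hasProbPoly_of_fintype {ι κ : Type} [Fintype κ] {f : (ι → Bool) → Bool} {ε : ℝ} {d : ℕ}
    (w : κ → ℝ) (P : κ → MvPolynomial ι ℝ)
    (hw : ∀ x, 0 ≤ w x) (hw1 : ∑ x, w x = 1) (hd : ∀ x, (P x).totalDegree ≤ d)
    (herr : ∀ a : ι → Bool,
      ∑ x ∈ Finset.univ.filter
          (fun x => evalBool a (P x) ≠ (if f a then (1:ℝ) else 0)), w x ≤ ε) :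
    HasProbPoly f ε d := by
  obtain ⟨n, ⟨e⟩⟩ : ∃ n, Nonempty (κ ≃ Fin n) := ⟨Fintype.card κ, ⟨Fintype.equivFin κ⟩⟩
  refine ⟨n, w ∘ e.symm, P ∘ e.symm, fun i => hw _, ?_, fun i => hd _, fun a => ?_⟩
  · simpa using (Equiv.sum_comp e.symm w).trans hw1
  · have := herr a
    rw [Finset.sum_filter] at this ⊢
    calc (∑ i : Fin n, if evalBool a ((P ∘ e.symm) i) ≠ (if f a then (1:ℝ) else 0)
            then (w ∘ e.symm) i else 0)
        = ∑ x : κ, if evalBool a (P x) ≠ (if f a then (1:ℝ) else 0) then w x else 0 :=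
          Fintype.sum_equiv e.symm _ _ (fun i => rfl)
      _ ≤ ε := this

noncomputable def exactPoly {n : ℕ} (f : (Fin n → Bool) → Bool) : MvPolynomial (Fin n) ℝ :=
  ∑ a ∈ Finset.univ.filter (fun a : Fin n → Bool => f a),
    ∏ i, (if a i then MvPolynomial.X i else (1 - MvPolynomial.X i))

lemma evalBool_exactPoly {n : ℕ} (f : (Fin n → Bool) → Bool) (b : Fin n → Bool) :
    evalBool b (exactPoly f) = if f b then (1:ℝ) else 0 := by
  unfold evalBool exactPoly
  rw [map_sum]
  have key : ∀ a : Fin n → Bool,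
      MvPolynomial.eval (fun i => if b i then (1:ℝ) else 0)
        (∏ i, (if a i then MvPolynomial.X i else (1 - MvPolynomial.X i)))
      = if a = b then 1 else 0 := by
    intro a
    rw [map_prod]
    by_cases hab : a = b
    · subst hab
      rw [if_pos rfl]
      refine Finset.prod_eq_one fun i _ => ?_
      by_cases hi : a i <;> simp [hi]
    · rw [if_neg hab]
      obtain ⟨i, hi⟩ := Function.ne_iff.mp hab
      refine Finset.prod_eq_zero (Finset.mem_univ i) ?_
      rcases hb : b i <;> rcases ha : a i <;> simp [ha, hb] at hi ⊢
  simp only [key]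
  rw [Finset.sum_ite_eq' _ b (fun _ => (1:ℝ))]
  simp [Finset.mem_filter]

lemma exactPoly_totalDegree {n : ℕ} (f : (Fin n → Bool) → Bool) :
    (exactPoly f).totalDegree ≤ n := by
  unfold exactPoly
  refine MvPolynomial.totalDegree_finsetSum_le fun a _ => ?_
  refine (MvPolynomial.totalDegree_finset_prod _ _).trans ?_
  calc ∑ i : Fin n, ((if a i then MvPolynomial.X i else (1 - MvPolynomial.X i)) : MvPolynomial (Fin n) ℝ).totalDegree
      ≤ ∑ _i : Fin n, 1 := by
        refine Finset.sum_le_sum fun i _ => ?_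
        by_cases hi : a i
        · simp [hi, MvPolynomial.totalDegree_X]
        · simp only [hi, if_false]
          rw [sub_eq_add_neg]
          refine (MvPolynomial.totalDegree_add _ _).trans ?_
          rw [MvPolynomial.totalDegree_one]
          refine max_le (Nat.zero_le _) ?_
          rw [← neg_one_smul ℝ (MvPolynomial.X i : MvPolynomial (Fin n) ℝ)]
          exact (MvPolynomial.totalDegree_smul_le _ _).trans
            (le_of_eq (MvPolynomial.totalDegree_X i))
    _ = n := by simp

lemma hasProbPoly_exists {n : ℕ} (f : (Fin n → Bool) → Bool) {ε : ℝ} (hε : 0 ≤ ε) :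
    HasProbPoly f ε n := by
  refine hasProbPoly_of_fintype (κ := Fin 1) (fun _ => 1) (fun _ => exactPoly f)
    (fun _ => zero_le_one) (by simp) (fun _ => exactPoly_totalDegree f) (fun a => ?_)
  have : Finset.univ.filter
      (fun x : Fin 1 => evalBool a (exactPoly f) ≠ (if f a then (1:ℝ) else 0)) = ∅ := by
    simp [evalBool_exactPoly]
  rw [this]
  simpa using hε


lemma hasProbPoly_comp {k m : ℕ} {f : (Fin k → Bool) → Bool}
    {g : Fin k → ((Fin m → Bool) → Bool)}
    {h : (Fin m → Bool) → Bool} (hh : ∀ x, h x = f (fun i => g i x))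
    {ε δ : ℝ} {df D : ℕ}
    (hf : HasProbPoly f ε df) (hg : ∀ i, HasProbPoly (g i) δ D) :
    HasProbPoly h (ε + k * δ) (df * D) := by
  obtain ⟨K, w, P, hw, hw1, hPd, hPerr⟩ := hf
  choose K' u Q hu hu1 hQd hQerr using hg
  have hv1 : ∑ v : ∀ i : Fin k, Fin (K' i), ∏ i, u i (v i) = 1 := by
    rw [← Fintype.prod_sum]
    simp [hu1]
  refine hasProbPoly_of_fintype (κ := Fin K × (∀ i : Fin k, Fin (K' i)))
    (fun x => w x.1 * ∏ i, u i (x.2 i))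
    (fun x => MvPolynomial.aeval (fun i => Q i (x.2 i)) (P x.1))
    (fun x => mul_nonneg (hw _) (Finset.prod_nonneg fun i _ => hu _ _)) ?_
    (fun x => (totalDegree_aeval_le _ _ D (fun i => hQd i (x.2 i))).trans
      (Nat.mul_le_mul_right _ (hPd x.1))) ?_
  · rw [Fintype.sum_prod_type]
    calc ∑ j, ∑ v : ∀ i : Fin k, Fin (K' i), w j * ∏ i, u i (v i)
        = ∑ j, w j * ∑ v : ∀ i : Fin k, Fin (K' i), ∏ i, u i (v i) := by
          simp [Finset.mul_sum]
      _ = 1 := by rw [hv1]; simpa using hw1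
  · intro a
    set b : Fin k → Bool := fun i => g i a with hb
    have hha : h a = f b := hh a
    -- conditions
    set cA : Fin K → Prop := fun j => evalBool b (P j) ≠ (if f b then (1:ℝ) else 0) with hcA
    set cB : ∀ i : Fin k, Fin (K' i) → Prop :=
      fun i x => evalBool a (Q i x) ≠ (if g i a then (1:ℝ) else 0) with hcB
    have key : ∀ (x : Fin K × (∀ i : Fin k, Fin (K' i))),
        evalBool a (MvPolynomial.aeval (fun i => Q i (x.2 i)) (P x.1))
          ≠ (if h a then (1:ℝ) else 0) →
        cA x.1 ∨ ∃ i, cB i (x.2 i) := by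
      intro x hx
      by_contra hcon
      push_neg at hcon
      obtain ⟨h1, h2⟩ := hcon
      apply hx
      rw [evalBool_aeval]
      have heq : (fun i => evalBool a (Q i (x.2 i))) = (fun i => if b i then (1:ℝ) else 0) := by
        funext i
        have h2i := h2 i
        simp only [hcB, ne_eq, not_not] at h2i
        simpa [hb] using h2i
      rw [heq]
      have h1' : evalBool b (P x.1) = (if f b then (1:ℝ) else 0) := by
        simp only [hcA, ne_eq, not_not] at h1; exact h1
      rw [hha]
      exact h1'
    -- union bound
    rw [Finset.sum_filter]
    have pointwise : ∀ (x : Fin K × (∀ i : Fin k, Fin (K' i))),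
        (if evalBool a (MvPolynomial.aeval (fun i => Q i (x.2 i)) (P x.1))
            ≠ (if h a then (1:ℝ) else 0) then w x.1 * ∏ i, u i (x.2 i) else 0)
        ≤ (if cA x.1 then w x.1 * ∏ i, u i (x.2 i) else 0)
          + ∑ i, (if cB i (x.2 i) then w x.1 * ∏ i', u i' (x.2 i') else 0) := by
      intro x
      have hWnn : 0 ≤ w x.1 * ∏ i, u i (x.2 i) :=
        mul_nonneg (hw _) (Finset.prod_nonneg fun i _ => hu _ _)
      have hAnn : (0:ℝ) ≤ if cA x.1 then w x.1 * ∏ i, u i (x.2 i) else 0 := by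
        split <;> simp [hWnn]
      have hBnn : ∀ i, (0:ℝ) ≤ if cB i (x.2 i) then w x.1 * ∏ i', u i' (x.2 i') else 0 := by
        intro i; split <;> simp [hWnn]
      by_cases hx : evalBool a (MvPolynomial.aeval (fun i => Q i (x.2 i)) (P x.1))
          ≠ (if h a then (1:ℝ) else 0)
      · rw [if_pos hx]
        rcases key x hx with hA | ⟨i0, hB⟩
        · rw [if_pos hA]
          exact le_add_of_nonneg_right (Finset.sum_nonneg fun i _ => hBnn i)
        · refine le_add_of_nonneg_of_le hAnn ?_
          calc w x.1 * ∏ i, u i (x.2 i)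
              = (if cB i0 (x.2 i0) then w x.1 * ∏ i', u i' (x.2 i') else 0) := by
                rw [if_pos hB]
            _ ≤ ∑ i, (if cB i (x.2 i) then w x.1 * ∏ i', u i' (x.2 i') else 0) :=
                Finset.single_le_sum (fun i _ => hBnn i) (Finset.mem_univ i0)
      · rw [if_neg hx]
        exact add_nonneg hAnn (Finset.sum_nonneg fun i _ => hBnn i)
    calc ∑ x : Fin K × (∀ i : Fin k, Fin (K' i)),
          (if evalBool a (MvPolynomial.aeval (fun i => Q i (x.2 i)) (P x.1))
              ≠ (if h a then (1:ℝ) else 0) then w x.1 * ∏ i, u i (x.2 i) else 0)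
        ≤ ∑ x : Fin K × (∀ i : Fin k, Fin (K' i)),
            ((if cA x.1 then w x.1 * ∏ i, u i (x.2 i) else 0)
              + ∑ i, (if cB i (x.2 i) then w x.1 * ∏ i', u i' (x.2 i') else 0)) :=
          Finset.sum_le_sum fun x _ => pointwise x
      _ = (∑ x : Fin K × (∀ i : Fin k, Fin (K' i)),
              (if cA x.1 then w x.1 * ∏ i, u i (x.2 i) else 0))
          + ∑ i, ∑ x : Fin K × (∀ i : Fin k, Fin (K' i)),
              (if cB i (x.2 i) then w x.1 * ∏ i', u i' (x.2 i') else 0) := by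
          rw [Finset.sum_add_distrib, Finset.sum_comm]
      _ ≤ ε + k * δ := by
          have hA : (∑ x : Fin K × (∀ i : Fin k, Fin (K' i)),
              (if cA x.1 then w x.1 * ∏ i, u i (x.2 i) else 0)) ≤ ε := by
            rw [Fintype.sum_prod_type]
            have : ∀ j : Fin K, (∑ v : ∀ i : Fin k, Fin (K' i),
                if cA j then w j * ∏ i, u i (v i) else 0)
                = if cA j then w j else 0 := by
              intro j
              by_cases hc : cA j
              · rw [if_pos hc, Finset.sum_congr rfl fun v _ => if_pos hc,
                  ← Finset.mul_sum, hv1, mul_one]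
              · rw [if_neg hc]
                exact Finset.sum_eq_zero fun v _ => if_neg hc
            simp only [this]
            rw [← Finset.sum_filter]
            exact hPerr b
          have hB : ∀ i : Fin k, (∑ x : Fin K × (∀ i : Fin k, Fin (K' i)),
              (if cB i (x.2 i) then w x.1 * ∏ i', u i' (x.2 i') else 0)) ≤ δ := by
            intro i
            set q : Fin (K' i) → ℝ := fun y => if cB i y then u i y else 0 with hq
            have claim1 : ∀ v : ∀ i' : Fin k, Fin (K' i'),
                ∏ i', (Function.update u i q) i' (v i')
                  = (if cB i (v i) then ∏ i', u i' (v i') else 0) := by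
              intro v
              by_cases hc : cB i (v i)
              · rw [if_pos hc]
                refine Finset.prod_congr rfl fun i' _ => ?_
                by_cases hi' : i' = i
                · subst hi'; rw [Function.update_self]; exact if_pos hc
                · rw [Function.update_of_ne hi']
              · rw [if_neg hc]
                refine Finset.prod_eq_zero (Finset.mem_univ i) ?_
                rw [Function.update_self]; exact if_neg hc
            have claim2 : (∑ v : ∀ i' : Fin k, Fin (K' i'),
                if cB i (v i) then ∏ i', u i' (v i') else 0) = ∑ y, q y := by
              rw [← Finset.sum_congr rfl fun v _ => (claim1 v), ← Fintype.prod_sum,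
                Finset.prod_eq_single i
                  (fun i' _ hi' => by rw [Function.update_of_ne hi']; exact hu1 i')
                  (fun hi => absurd (Finset.mem_univ i) hi),
                Function.update_self]
            have hqle : ∑ y, q y ≤ δ := by
              have hqe := hQerr i a
              rw [Finset.sum_filter] at hqe
              exact hqe
            calc (∑ x : Fin K × (∀ i : Fin k, Fin (K' i)),
                (if cB i (x.2 i) then w x.1 * ∏ i', u i' (x.2 i') else 0))
                = ∑ j : Fin K, ∑ v : ∀ i' : Fin k, Fin (K' i'),
                    (if cB i (v i) then w j * ∏ i', u i' (v i') else 0) := by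
                  rw [Fintype.sum_prod_type]
              _ = ∑ j : Fin K, w j * ∑ v : ∀ i' : Fin k, Fin (K' i'),
                    (if cB i (v i) then ∏ i', u i' (v i') else 0) := by
                  refine Finset.sum_congr rfl fun j _ => ?_
                  rw [Finset.mul_sum]
                  refine Finset.sum_congr rfl fun v _ => ?_
                  by_cases hc : cB i (v i)
                  · rw [if_pos hc, if_pos hc]
                  · rw [if_neg hc, if_neg hc, mul_zero]
              _ = ∑ j : Fin K, w j * ∑ y, q y := by rw [claim2]
              _ = ∑ y, q y := by rw [← Finset.sum_mul, hw1, one_mul]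
              _ ≤ δ := hqle
          calc (∑ x : Fin K × (∀ i : Fin k, Fin (K' i)),
                  (if cA x.1 then w x.1 * ∏ i, u i (x.2 i) else 0))
                + ∑ i, ∑ x : Fin K × (∀ i : Fin k, Fin (K' i)),
                    (if cB i (x.2 i) then w x.1 * ∏ i', u i' (x.2 i') else 0)
              ≤ ε + ∑ _i : Fin k, δ := add_le_add hA (Finset.sum_le_sum fun i _ => hB i)
            _ = ε + k * δ := by simp [Finset.sum_const, nsmul_eq_mul]

lemma HasProbPoly.mono {ι : Type} {f : (ι → Bool) → Bool} {ε : ℝ} {d d' : ℕ}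
    (hd : HasProbPoly f ε d) (hdd : d ≤ d') : HasProbPoly f ε d' := by
  obtain ⟨K, w, P, h1, h2, h3, h4⟩ := hd
  exact ⟨K, w, P, h1, h2, fun i => (h3 i).trans hdd, h4⟩

theorem pdeg_composition (k m : ℕ)
    (f : (Fin k → Bool) → Bool) (g : Fin k → ((Fin m → Bool) → Bool))
    (h : (Fin m → Bool) → Bool) (hh : ∀ x, h x = f (fun i => g i x))
    (ε δ : ℝ) (hε : 0 ≤ ε) (hδ : 0 ≤ δ) (hsum : ε + k * δ ≤ 1) :
    pdeg (ε + k * δ) h ≤ pdeg ε f * Finset.univ.sup (fun i => pdeg δ (g i)) := by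
  have hfne : HasProbPoly f ε (pdeg ε f) :=
    Nat.sInf_mem (⟨k, hasProbPoly_exists f hε⟩ : Set.Nonempty {d | HasProbPoly f ε d})
  set D := Finset.univ.sup (fun i => pdeg δ (g i)) with hD
  have hgne : ∀ i, HasProbPoly (g i) δ D := fun i =>
    (Nat.sInf_mem (⟨m, hasProbPoly_exists (g i) hδ⟩ :
      Set.Nonempty {d | HasProbPoly (g i) δ d})).mono
      (Finset.le_sup (f := fun i => pdeg δ (g i)) (Finset.mem_univ i))
  exact Nat.sInf_le (hasProbPoly_comp hh hfne hgne)
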